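/- The lamp action of the lamplighter group on {0,1}^E does not have the shadowing (pseudo-orbit tracing) property: for every δ > 0 smaller than the distance between the all-0 and all-1 configurations, and every ε > 0, there is an ε-pseudo-orbit that is not δ-shadowed by any orbit. -/

import Mathlib

/-!
The lamp action of the lamplighter group on `{0,1}^(ℤ+½)` does not have the
shadowing (pseudo-orbit tracing) property: for every `δ > 0` smaller than the
distance between the all-`0` and all-`1` configurations, and every `ε > 0`,
there is an `ε`-pseudo-orbit (e.g. the one induced by lamps arranged on a
cycle `ℤ/2k` with `2^{-k} < ε`, lifted periodically) which is not `δ`-shadowed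
by any genuine orbit.  The lamplighter group is realized as the subgroup of
`Equiv.Perm LampConf` generated by `a` and `b`, with the distance
`d(x,y) = Σᵢ 2^{-|i|} [xᵢ ≠ yᵢ]`.
-/

abbrev LampConf : Type := ℤ → ZMod 2

def lampA : Equiv.Perm LampConf :=
  (Equiv.addRight (-1 : ℤ)).arrowCongr (Equiv.refl (ZMod 2))

def lampFlip : LampConf := fun i => if i = -1 then 1 else 0

def lampB : Equiv.Perm LampConf := lampA.trans (Equiv.addLeft lampFlip)

noncomputable def lampDist (x y : LampConf) : ℝ :=
  ∑' i : ℤ, if x i = y i then 0 else (2 : ℝ)⁻¹ ^ i.natAbs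

/-- The lamplighter group, as the subgroup of permutations of lamp
configurations generated by `a` and `b`. -/
def LL : Subgroup (Equiv.Perm LampConf) := Subgroup.closure {lampA, lampB}

def aLL : LL := ⟨lampA, Subgroup.subset_closure (by simp)⟩

def bLL : LL := ⟨lampB, Subgroup.subset_closure (by simp)⟩

lemma lampA_apply (x : LampConf) (i : ℤ) : lampA x i = x (i + 1) := by
  simp [lampA, Equiv.arrowCongr]

lemma lampB_apply (x : LampConf) (i : ℤ) : lampB x i = lampFlip i + x (i + 1) := by
  simp [lampB, lampA, Equiv.arrowCongr]

noncomputable def lw : ℤ → ℝ := fun i => (2 : ℝ)⁻¹ ^ i.natAbs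

lemma lw_nonneg (i : ℤ) : 0 ≤ lw i := by unfold lw; positivity

lemma summable_lw : Summable lw := by
  apply Summable.of_nat_of_neg <;>
    · apply Summable.congr (summable_geometric_of_lt_one (by norm_num) (by norm_num : (2:ℝ)⁻¹ < 1))
      intro n; simp [lw]

lemma summable_mismatch (x y : LampConf) :
    Summable (fun i : ℤ => if x i = y i then 0 else lw i) := by
  apply Summable.of_nonneg_of_le _ _ summable_lw
  · intro i; split <;> [rfl; exact lw_nonneg i]
  · intro i; split <;> [exact lw_nonneg i; rfl]

lemma lampDist_eq (x y : LampConf) :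
    lampDist x y = ∑' i : ℤ, if x i = y i then 0 else lw i := rfl

lemma lampDist_self (x : LampConf) : lampDist x x = 0 := by
  simp [lampDist]

lemma lampDist_zero_one : lampDist (fun _ => 0) (fun _ => 1) = ∑' i, lw i := by
  rw [lampDist_eq]; exact tsum_congr fun i => if_neg (by decide)

lemma zmod2_cases (a : ZMod 2) : a = 0 ∨ a = 1 := by revert a; decide

lemma zmod2_solve (a b c : ZMod 2) (h : b = c + a) : a = c + b := by revert a b c; decide

lemma zmod2_ne_add_one (a : ZMod 2) : a ≠ a + 1 := by revert a; decide

/-- Structure of elements of the lamplighter group: affine maps with finitely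
supported translation part. -/
lemma LL_struct {g : Equiv.Perm LampConf} (hg : g ∈ LL) :
    (∃ n : ℤ, ∀ (x : LampConf) (i : ℤ), g x i = g 0 i + x (i + n)) ∧
      {i : ℤ | g 0 i ≠ 0}.Finite := by
  induction hg using Subgroup.closure_induction with
  | mem y hy =>
    rcases hy with hy | hy <;> subst hy
    · refine ⟨⟨1, fun x i => ?_⟩, ?_⟩
      · simp [lampA_apply]
      · convert Set.finite_empty
        ext i; simp [lampA_apply]
    · refine ⟨⟨1, fun x i => ?_⟩, ?_⟩
      · simp [lampB_apply]
      · apply Set.Finite.subset (Set.finite_singleton (-1 : ℤ))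
        intro i hi
        simp only [Set.mem_setOf_eq, lampB_apply] at hi
        simp only [Set.mem_singleton_iff]
        by_contra h
        exact hi (by simp [lampFlip, h])
  | one =>
    refine ⟨⟨0, fun x i => ?_⟩, ?_⟩
    · simp
    · convert Set.finite_empty
      ext i; simp
  | mul y z hy hz ihy ihz =>
    obtain ⟨⟨n, hn⟩, hfy⟩ := ihy
    obtain ⟨⟨m, hm⟩, hfz⟩ := ihz
    have key : ∀ (x : LampConf) (i : ℤ), (y * z) x i = y 0 i + z 0 (i + n) + x (i + (n + m)) := by
      intro x i
      have h1 : (y * z) x i = y (z x) i := rfl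
      rw [h1, hn (z x) i, hm x (i + n), add_assoc i n m, add_assoc]
    refine ⟨⟨n + m, fun x i => ?_⟩, ?_⟩
    · rw [key, key 0 i]; simp
    · apply Set.Finite.subset (hfy.union (hfz.preimage (f := fun i : ℤ => i + n)
        (fun a _ b _ h => by simpa using h)))
      intro i hi
      simp only [Set.mem_setOf_eq] at hi
      rw [key 0 i] at hi
      simp only [Pi.zero_apply, add_zero] at hi
      by_contra h
      simp only [Set.mem_union, Set.mem_setOf_eq, Set.mem_preimage, not_or, not_ne_iff] at h
      exact hi (by rw [h.1, h.2]; simp)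
  | inv y hy ihy =>
    obtain ⟨⟨n, hn⟩, hfy⟩ := ihy
    have key : ∀ (x : LampConf) (j : ℤ), y⁻¹ x j = y 0 (j - n) + x (j - n) := by
      intro x j
      have h1 : y (y⁻¹ x) (j - n) = y 0 (j - n) + (y⁻¹ x) ((j - n) + n) := hn _ _
      rw [show y (y⁻¹ x) = x from Equiv.apply_symm_apply y x] at h1
      have h2 : j - n + n = j := by omega
      rw [h2] at h1
      exact zmod2_solve _ _ _ h1
    refine ⟨⟨-n, fun x i => ?_⟩, ?_⟩
    · rw [key, key 0 i]; simp [sub_eq_add_neg]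
    · apply Set.Finite.subset (hfy.preimage (f := fun i : ℤ => i - n) (fun a _ b _ h => by simpa using h))
      intro i hi
      simp only [Set.mem_setOf_eq, key] at hi ⊢
      simpa using hi

lemma addLeft_flip_mem : Equiv.addLeft lampFlip ∈ LL := by
  have h : Equiv.addLeft lampFlip = lampB * lampA⁻¹ := by
    apply Equiv.ext
    intro x
    funext i
    have : (lampB * lampA⁻¹) x = lampB (lampA⁻¹ x) := rfl
    rw [this, lampB_apply]
    simp [lampA, Equiv.arrowCongr, Equiv.Perm.inv_def]
  rw [h]
  exact mul_mem bLL.2 (inv_mem aLL.2)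

lemma addLeft_shift_up {c : LampConf} (h : Equiv.addLeft c ∈ LL) :
    Equiv.addLeft (fun i => c (i + 1)) ∈ LL := by
  have key : Equiv.addLeft (fun i => c (i + 1)) = lampA * Equiv.addLeft c * lampA⁻¹ := by
    apply Equiv.ext
    intro x
    funext i
    have h1 : (lampA * Equiv.addLeft c * lampA⁻¹) x = lampA (c + lampA⁻¹ x) := rfl
    rw [h1, lampA_apply]
    have h2 : (Equiv.addLeft (fun i : ℤ => c (i + 1)) x) i = c (i + 1) + x i := rfl
    rw [h2]
    simp [lampA, Equiv.arrowCongr, Equiv.Perm.inv_def]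
  rw [key]
  exact mul_mem (mul_mem aLL.2 h) (inv_mem aLL.2)

lemma addLeft_shift_down {c : LampConf} (h : Equiv.addLeft c ∈ LL) :
    Equiv.addLeft (fun i => c (i - 1)) ∈ LL := by
  have key : Equiv.addLeft (fun i => c (i - 1)) = lampA⁻¹ * Equiv.addLeft c * lampA := by
    apply Equiv.ext
    intro x
    funext i
    have h1 : (lampA⁻¹ * Equiv.addLeft c * lampA) x = lampA⁻¹ (c + lampA x) := rfl
    rw [h1]
    have h2 : (Equiv.addLeft (fun i : ℤ => c (i - 1)) x) i = c (i - 1) + x i := rfl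
    rw [h2]
    simp [lampA, Equiv.arrowCongr, Equiv.Perm.inv_def, sub_eq_add_neg]
  rw [key]
  exact mul_mem (mul_mem (inv_mem aLL.2) h) aLL.2

lemma addLeft_single_mem (q : ℤ) :
    Equiv.addLeft (fun i => if i = q then (1 : ZMod 2) else 0) ∈ LL := by
  induction q using Int.induction_on with
  | zero =>
    have h : (fun i : ℤ => if i = 0 then (1 : ZMod 2) else 0) = fun i => lampFlip (i - 1) := by
      funext i
      rcases eq_or_ne i 0 with h | h
      · subst h; simp [lampFlip]
      · rw [if_neg h]; simp only [lampFlip]; rw [if_neg (by omega)]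
    rw [h]
    exact addLeft_shift_down addLeft_flip_mem
  | succ q ih =>
    have h : (fun i : ℤ => if i = (q : ℤ) + 1 then (1 : ZMod 2) else 0)
        = fun i : ℤ => if i - 1 = (q : ℤ) then (1 : ZMod 2) else 0 := by
      funext i
      rcases eq_or_ne i ((q : ℤ) + 1) with h | h
      · subst h; simp
      · rw [if_neg h, if_neg (by omega)]
    rw [h]
    exact addLeft_shift_down ih
  | pred q ih =>
    have h : (fun i : ℤ => if i = -(q : ℤ) - 1 then (1 : ZMod 2) else 0)
        = fun i : ℤ => if i + 1 = -(q : ℤ) then (1 : ZMod 2) else 0 := by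
      funext i
      rcases eq_or_ne i (-(q : ℤ) - 1) with h | h
      · subst h; simp
      · rw [if_neg h, if_neg (by omega)]
    rw [h]
    exact addLeft_shift_up ih

lemma addLeft_zero_mem : Equiv.addLeft (0 : LampConf) ∈ LL := by
  have : Equiv.addLeft (0 : LampConf) = 1 := by
    apply Equiv.ext; intro x; simp
  rw [this]; exact one_mem _

lemma addLeft_mem_of_support (s : Finset ℤ) :
    ∀ c : LampConf, (∀ i ∉ s, c i = 0) → Equiv.addLeft c ∈ LL := by
  induction s using Finset.induction_on with
  | empty =>
    intro c hc
    have : c = 0 := funext fun i => hc i (by simp)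
    rw [this]; exact addLeft_zero_mem
  | @insert a s ha ih =>
    intro c hc
    have h1 : Equiv.addLeft (Function.update c a 0) ∈ LL := by
      apply ih
      intro i hi
      rcases eq_or_ne i a with h | h
      · subst h; simp
      · rw [Function.update_of_ne h]
        exact hc i (by simp [hi, h])
    have h2 : Equiv.addLeft (fun i => if i = a then c a else 0) ∈ LL := by
      rcases zmod2_cases (c a) with h | h
      · rw [h]
        have h0 : (fun i : ℤ => if i = a then (0 : ZMod 2) else 0) = (0 : LampConf) := by
          funext i; simp
        rw [h0]; exact addLeft_zero_mem
      · rw [h]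
        exact addLeft_single_mem a
    have key : Equiv.addLeft c
        = Equiv.addLeft (fun i => if i = a then c a else 0) * Equiv.addLeft (Function.update c a 0) := by
      apply Equiv.ext
      intro x
      funext i
      show c i + x i = (fun i => if i = a then c a else 0) i + (Function.update c a 0 i + x i)
      rcases eq_or_ne i a with h | h
      · subst h; simp
      · simp [h, Function.update_of_ne h]
    rw [key]
    exact mul_mem h2 h1

noncomputable def lampPhi (N : ℕ) (g : LL) : LampConf :=
  fun i => ∑ᶠ m : ℤ, (g : Equiv.Perm LampConf) 0 (i + (N : ℤ) * m)

lemma lampPhi_a (N : ℕ) (g : LL) : lampPhi N (aLL * g) = lampA (lampPhi N g) := by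
  funext i
  rw [lampA_apply]
  show ∑ᶠ m : ℤ, ((aLL * g : LL) : Equiv.Perm LampConf) 0 (i + (N:ℤ) * m)
      = ∑ᶠ m : ℤ, (g : Equiv.Perm LampConf) 0 (i + 1 + (N:ℤ) * m)
  apply finsum_congr
  intro m
  have h1 : ((aLL * g : LL) : Equiv.Perm LampConf) 0 (i + (N:ℤ) * m)
      = lampA ((g : Equiv.Perm LampConf) 0) (i + (N:ℤ) * m) := rfl
  rw [h1, lampA_apply]
  congr 1
  ring

lemma lampPhi_b (N : ℕ) (hN : (N:ℤ) ≠ 0) (g : LL) (i : ℤ) :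
    lampPhi N (bLL * g) i
      = (if (N:ℤ) ∣ i + 1 then (1 : ZMod 2) else 0) + lampPhi N g (i + 1) := by
  obtain ⟨-, hfin⟩ := LL_struct g.2
  have e1 : ∀ m : ℤ, ((bLL * g : LL) : Equiv.Perm LampConf) 0 (i + (N:ℤ) * m)
      = lampFlip (i + (N:ℤ)*m) + (g : Equiv.Perm LampConf) 0 (i + (N:ℤ)*m + 1) := by
    intro m
    have h1 : ((bLL * g : LL) : Equiv.Perm LampConf) 0 (i + (N:ℤ) * m)
        = lampB ((g : Equiv.Perm LampConf) 0) (i + (N:ℤ) * m) := rfl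
    rw [h1, lampB_apply]
  have hfin1 : (Function.support fun m : ℤ => lampFlip (i + (N:ℤ)*m)).Finite := by
    apply Set.Subsingleton.finite
    intro m1 h1 m2 h2
    simp only [Function.mem_support] at h1 h2
    have hm1 : i + (N:ℤ)*m1 = -1 := by
      by_contra h; exact h1 (if_neg h)
    have hm2 : i + (N:ℤ)*m2 = -1 := by
      by_contra h; exact h2 (if_neg h)
    have : (N:ℤ) * m1 = (N:ℤ) * m2 := by linarith
    exact mul_left_cancel₀ hN this
  have hinj2 : Function.Injective (fun m : ℤ => i + (N:ℤ)*m + 1) := by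
    intro m1 m2 h
    simp only at h
    have : (N:ℤ) * m1 = (N:ℤ) * m2 := by linarith
    exact mul_left_cancel₀ hN this
  have hfin2 : (Function.support fun m : ℤ =>
      (g : Equiv.Perm LampConf) 0 (i + (N:ℤ)*m + 1)).Finite := by
    apply Set.Finite.subset (hfin.preimage hinj2.injOn)
    intro m hm
    exact hm
  show ∑ᶠ m : ℤ, ((bLL * g : LL) : Equiv.Perm LampConf) 0 (i + (N:ℤ) * m) = _
  rw [finsum_congr e1, finsum_add_distrib hfin1 hfin2]
  congr 1
  · -- flip part
    split_ifs with h
    · obtain ⟨m₀, hm₀⟩ := h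
      rw [finsum_eq_single _ (-m₀)]
      · have hx : i + (N:ℤ) * -m₀ = -1 := by
          have : (N:ℤ) * -m₀ = -((N:ℤ)*m₀) := by ring
          rw [this]; omega
        rw [hx]; simp [lampFlip]
      · intro m hm
        apply if_neg
        intro h'
        apply hm
        have : (N:ℤ) * m = (N:ℤ) * -m₀ := by
          have : (N:ℤ) * -m₀ = -((N:ℤ)*m₀) := by ring
          omega
        exact mul_left_cancel₀ hN this
    · apply finsum_eq_zero_of_forall_eq_zero
      intro m
      apply if_neg
      intro h'
      apply h
      refine ⟨-m, ?_⟩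
      have : (N:ℤ) * -m = -((N:ℤ)*m) := by ring
      omega
  · -- shift part
    apply finsum_congr
    intro m
    congr 1
    ring

lemma lampPhi_b_dist (N : ℕ) (hN2 : 2 ≤ N) (g : LL) :
    lampDist (lampPhi N (bLL * g)) (lampB (lampPhi N g))
      ≤ (2:ℝ)⁻¹ ^ (N - 2) * ∑' i : ℤ, lw i := by
  have hNz : (N:ℤ) ≠ 0 := by
    simp only [ne_eq, Nat.cast_eq_zero]; omega
  set f : ℤ → ℝ := fun i => if (N:ℤ) ∣ i + 1 ∧ i ≠ -1 then lw i else 0 with hf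
  have hf_nonneg : ∀ i, 0 ≤ f i := by
    intro i; rw [hf]; dsimp only; split
    · exact lw_nonneg i
    · exact le_refl 0
  have hf_le_lw : ∀ i, f i ≤ lw i := by
    intro i; rw [hf]; dsimp only; split
    · exact le_refl _
    · exact lw_nonneg i
  have hf_sum : Summable f := Summable.of_nonneg_of_le hf_nonneg hf_le_lw summable_lw
  have hinj : Function.Injective (fun m : ℤ => (N:ℤ)*m - 1) := by
    intro m1 m2 h
    simp only at h
    exact mul_left_cancel₀ hNz (by linarith)
  have step1 : lampDist (lampPhi N (bLL * g)) (lampB (lampPhi N g)) ≤ ∑' i : ℤ, f i := by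
    rw [lampDist_eq]
    apply Summable.tsum_le_tsum _ (summable_mismatch _ _) hf_sum
    intro i
    by_cases hcase : lampPhi N (bLL * g) i = lampB (lampPhi N g) i
    · rw [if_pos hcase]; exact hf_nonneg i
    · rw [if_neg hcase]
      have hcond : (N:ℤ) ∣ i + 1 ∧ i ≠ -1 := by
        constructor
        · by_contra hd
          apply hcase
          rw [lampPhi_b N hNz g i, lampB_apply]
          have hne : i ≠ -1 := by
            intro h; subst h; exact hd ⟨0, by ring⟩
          rw [if_neg hd]
          simp [lampFlip, hne]
        · intro h; subst h
          apply hcase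
          rw [lampPhi_b N hNz g (-1), lampB_apply]
          rw [if_pos (by simp)]
          simp [lampFlip]
      rw [hf]; dsimp only; rw [if_pos hcond]
  have step2 : ∑' i : ℤ, f i = ∑' m : ℤ, f ((N:ℤ)*m - 1) := by
    symm
    apply hinj.tsum_eq
    intro i hi
    rw [Function.mem_support, hf] at hi
    dsimp only at hi
    have hcond : (N:ℤ) ∣ i + 1 ∧ i ≠ -1 := by
      by_contra h; exact hi (if_neg h)
    obtain ⟨⟨m, hm⟩, -⟩ := hcond
    refine ⟨m, ?_⟩
    show (N:ℤ)*m - 1 = i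
    omega
  have step3 : ∑' m : ℤ, f ((N:ℤ)*m - 1) ≤ ∑' m : ℤ, (2:ℝ)⁻¹ ^ (N-2) * lw m := by
    apply Summable.tsum_le_tsum _ (hf_sum.comp_injective hinj) (summable_lw.mul_left _)
    intro m
    simp only [Function.comp]
    rcases eq_or_ne m 0 with rfl | hm
    · have e0 : (N:ℤ)*0 - 1 = -1 := by ring
      rw [e0, hf]; dsimp only
      rw [if_neg (by simp)]
      have : (0:ℝ) ≤ (2:ℝ)⁻¹ ^ (N-2) * lw 0 := by
        apply mul_nonneg _ (lw_nonneg 0); positivity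
      exact this
    · refine (hf_le_lw _).trans ?_
      simp only [lw]
      rw [← pow_add]
      apply pow_le_pow_of_le_one (by norm_num) (by norm_num)
      have h2 : 1 ≤ m.natAbs := by omega
      have h1 : ((N:ℤ)*m).natAbs = N * m.natAbs := by
        rw [Int.natAbs_mul, Int.natAbs_natCast]
      have h3 : N + m.natAbs ≤ N * m.natAbs + 1 := by nlinarith
      have h4 : ((N:ℤ)*m).natAbs ≤ ((N:ℤ)*m - 1).natAbs + 1 := by
        have e : (N:ℤ)*m = ((N:ℤ)*m - 1) - (-1) := by ring
        calc ((N:ℤ)*m).natAbs = (((N:ℤ)*m - 1) - (-1)).natAbs := by rw [← e]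
          _ ≤ ((N:ℤ)*m - 1).natAbs + (-1:ℤ).natAbs := Int.natAbs_sub_le _ _
          _ = ((N:ℤ)*m - 1).natAbs + 1 := rfl
      have hfinal : N + m.natAbs ≤ ((N:ℤ)*m - 1).natAbs + 2 := by
        rw [h1] at h4; omega
      omega
  have step4 : ∑' m : ℤ, (2:ℝ)⁻¹ ^ (N-2) * lw m = (2:ℝ)⁻¹ ^ (N-2) * ∑' i : ℤ, lw i :=
    tsum_mul_left
  calc lampDist (lampPhi N (bLL * g)) (lampB (lampPhi N g)) ≤ ∑' i : ℤ, f i := step1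
    _ = ∑' m : ℤ, f ((N:ℤ)*m - 1) := step2
    _ ≤ ∑' m : ℤ, (2:ℝ)⁻¹ ^ (N-2) * lw m := step3
    _ = _ := step4

def shadowC (N M : ℕ) (x : LampConf) : LampConf :=
  fun j => if -(M:ℤ) ≤ j - (N:ℤ) ∧ j - (N:ℤ) ≤ (M:ℤ) then x (j - (N:ℤ)) + 1 else 0

lemma shadowC_mem (N M : ℕ) (x : LampConf) : Equiv.addLeft (shadowC N M x) ∈ LL := by
  apply addLeft_mem_of_support (Finset.Icc ((N:ℤ) - M) ((N:ℤ) + M))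
  intro i hi
  simp only [Finset.mem_Icc, not_and_or, not_le] at hi
  simp only [shadowC]
  rw [if_neg (by omega)]

lemma shadowC_small (N M : ℕ) (hNM : 2*M + 1 < N) (x : LampConf) (i : ℤ)
    (hi : i.natAbs ≤ M) : shadowC N M x i = 0 := by
  simp only [shadowC]
  rw [if_neg (by omega)]

lemma shadowC_phi (N M : ℕ) (hNM : 2*M + 1 < N) (x : LampConf)
    (g : LL) (hg : (g : Equiv.Perm LampConf) = Equiv.addLeft (shadowC N M x))
    (i : ℤ) (hi : i.natAbs ≤ M) :
    lampPhi N g i = x i + 1 := by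
  show ∑ᶠ m : ℤ, (g : Equiv.Perm LampConf) 0 (i + (N:ℤ)*m) = x i + 1
  have h0 : ∀ m : ℤ, (g : Equiv.Perm LampConf) 0 (i + (N:ℤ)*m)
      = shadowC N M x (i + (N:ℤ)*m) := by
    intro m; rw [hg]; simp
  rw [finsum_congr h0, finsum_eq_single _ (1:ℤ)]
  · simp only [shadowC]
    rw [if_pos (by omega)]
    have e1 : i + (N:ℤ)*1 - N = i := by ring
    rw [e1]
  · intro m hm
    simp only [shadowC]
    apply if_neg
    intro hcon
    apply hm
    obtain ⟨h1, h2⟩ := hcon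
    have h3 : ((i + (N:ℤ)*m - N) - i).natAbs ≤ 2*M := by
      generalize (i + (N:ℤ)*m - (N:ℤ)) = v at h1 h2 ⊢
      omega
    have e2 : (N:ℤ)*(m-1) = (i + (N:ℤ)*m - N) - i := by ring
    rw [← e2, Int.natAbs_mul, Int.natAbs_natCast] at h3
    by_contra hne
    have h5 : 1 ≤ (m-1).natAbs := by omega
    have h6 : N * 1 ≤ N * (m-1).natAbs := Nat.mul_le_mul_left N h5
    rw [Nat.mul_one] at h6
    generalize hQ : N * (m - 1).natAbs = Q at h3 h6
    omega

/-- No shadowing for the lamp action. -/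
theorem lamp_action_no_shadowing :
    ∀ δ : ℝ, 0 < δ →
      δ < lampDist (fun _ => 0) (fun _ => 1) →
      ∀ ε : ℝ, 0 < ε →
        ∃ φ : LL → LampConf,
          (∀ g : LL, lampDist (φ (aLL * g)) (lampA (φ g)) < ε ∧
            lampDist (φ (bLL * g)) (lampB (φ g)) < ε) ∧
          ¬ ∃ x : LampConf, ∀ g : LL,
              lampDist ((g : Equiv.Perm LampConf) x) (φ g) < δ := by
  intro δ hδ hδ3 ε hε
  -- a finite set of sites carrying weight more than δ
  obtain ⟨F, hF⟩ : ∃ F : Finset ℤ, δ < ∑ i ∈ F, lw i := by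
    have hs : HasSum lw (lampDist (fun _ => 0) (fun _ => 1)) := by
      rw [lampDist_zero_one]; exact summable_lw.hasSum
    exact (hs.eventually (Ioi_mem_nhds hδ3)).exists
  set M : ℕ := F.sup Int.natAbs with hM_def
  have hM : ∀ i ∈ F, i.natAbs ≤ M := fun i hi => Finset.le_sup hi
  have hS : (0:ℝ) < lampDist (fun _ => 0) (fun _ => 1) := hδ.trans hδ3
  obtain ⟨n₀, hn₀⟩ := exists_pow_lt_of_lt_one
    (div_pos hε hS) (by norm_num : (2:ℝ)⁻¹ < 1)
  set N : ℕ := max (n₀ + 2) (2 * M + 2) with hN_def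
  have hN2 : 2 ≤ N := by omega
  have hNM : 2 * M + 1 < N := by omega
  have hNε : (2:ℝ)⁻¹ ^ (N - 2) * lampDist (fun _ => 0) (fun _ => 1) < ε := by
    have h1 : ((2:ℝ)⁻¹) ^ (N - 2) ≤ (2:ℝ)⁻¹ ^ n₀ :=
      pow_le_pow_of_le_one (by norm_num) (by norm_num) (by omega)
    have h2 : ((2:ℝ)⁻¹) ^ (N - 2) * lampDist (fun _ => 0) (fun _ => 1)
        ≤ (2:ℝ)⁻¹ ^ n₀ * lampDist (fun _ => 0) (fun _ => 1) :=
      mul_le_mul_of_nonneg_right h1 hS.le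
    have h3 : ((2:ℝ)⁻¹) ^ n₀ * lampDist (fun _ => 0) (fun _ => 1) < ε :=
      (lt_div_iff₀ hS).mp hn₀
    linarith
  refine ⟨lampPhi N, fun g => ⟨?_, ?_⟩, ?_⟩
  · rw [lampPhi_a, lampDist_self]; exact hε
  · calc lampDist (lampPhi N (bLL * g)) (lampB (lampPhi N g))
        ≤ (2:ℝ)⁻¹ ^ (N - 2) * ∑' i : ℤ, lw i := lampPhi_b_dist N hN2 g
      _ = (2:ℝ)⁻¹ ^ (N - 2) * lampDist (fun _ => 0) (fun _ => 1) := by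
          rw [lampDist_zero_one]
      _ < ε := hNε
  · rintro ⟨x, hx⟩
    set g : LL := ⟨Equiv.addLeft (shadowC N M x), shadowC_mem N M x⟩ with hg_def
    have hgc : (g : Equiv.Perm LampConf) = Equiv.addLeft (shadowC N M x) := rfl
    have hFi : ∀ i ∈ F, (g : Equiv.Perm LampConf) x i ≠ lampPhi N g i := by
      intro i hiF
      have hi : i.natAbs ≤ M := hM i hiF
      have h1 : (g : Equiv.Perm LampConf) x i = x i := by
        rw [hgc]
        show shadowC N M x i + x i = x i
        rw [shadowC_small N M hNM x i hi, zero_add]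
      have h2 : lampPhi N g i = x i + 1 := shadowC_phi N M hNM x g hgc i hi
      rw [h1, h2]
      exact zmod2_ne_add_one (x i)
    have hlow : ∑ i ∈ F, lw i ≤ lampDist ((g : Equiv.Perm LampConf) x) (lampPhi N g) := by
      rw [lampDist_eq]
      calc ∑ i ∈ F, lw i
          = ∑ i ∈ F, (if (g : Equiv.Perm LampConf) x i = lampPhi N g i then 0 else lw i) := by
            apply Finset.sum_congr rfl
            intro i hi
            rw [if_neg (hFi i hi)]
        _ ≤ ∑' i : ℤ, (if (g : Equiv.Perm LampConf) x i = lampPhi N g i then 0 else lw i) := by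
            apply Summable.sum_le_tsum F _ (summable_mismatch _ _)
            intro i _
            split
            · exact le_refl 0
            · exact lw_nonneg i
    linarith [hx g, hF]
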